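/- arXiv:2212.07124 — 2 statements merged into one kernel-verified Lean document; each statement's English description precedes it below -/
import Mathlib

section
/- If P' is a subsequence of P such that every vertex of P is within distance μ of the last vertex of P' that precedes it, then D_F(P, Q) ≤ D_F(P', Q) + μ for any sequence Q. -/
open scoped BigOperators

namespace Frechet

variable {X : Type*}

/-- A single step of a monotone discrete walk: each coordinate increases by 0 or 1,
and not both stay the same. -/
def IsStep (a b : ℕ × ℕ) : Prop :=
  (b.1 = a.1 ∨ b.1 = a.1 + 1) ∧ (b.2 = a.2 ∨ b.2 = a.2 + 1) ∧ b ≠ a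

/-- A monotone discrete walk from (0,0) to (n-1, m-1) in the n × m lattice
(0-indexed version of a walk from (1,1) to (n,m)). -/
def IsWalk (n m : ℕ) (F : List (ℕ × ℕ)) : Prop :=
  F ≠ [] ∧ F.head? = some (0, 0) ∧ F.getLast? = some (n - 1, m - 1) ∧
    F.Chain' IsStep ∧ ∀ p ∈ F, p.1 < n ∧ p.2 < m

/-- Cost of a walk: the maximum matched distance along it. -/
def walkCost (d : X → X → ℝ) (P Q : ℕ → X) (F : List (ℕ × ℕ)) : ℝ :=
  (F.map fun p => d (P p.1) (Q p.2)).foldr max 0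

/-- Discrete Fréchet distance between `P` (first `n` points) and `Q` (first `m` points),
computed with respect to the distance-like function `d`. -/
noncomputable def dF (d : X → X → ℝ) (P : ℕ → X) (n : ℕ) (Q : ℕ → X) (m : ℕ) : ℝ :=
  sInf {c | ∃ F, IsWalk n m F ∧ walkCost d P Q F = c}

/-- Arc length of the polygonal curve `P` between vertex indices `i` and `j`. -/
def arcLen (d : X → X → ℝ) (P : ℕ → X) (i j : ℕ) : ℝ :=
  ∑ k ∈ Finset.Ico i j, d (P k) (P (k + 1))

/-- `S` is the list of indices of the greedy `μ`-simplification of the curve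
`P` with `n` vertices: it starts at vertex `0`, after a vertex `a` the next chosen
vertex `b` is the first one with arc length `> μ` (unless `b` is the final vertex
`n-1`, which is always appended), and it ends at vertex `n-1`. -/
def IsSimplification (d : X → X → ℝ) (P : ℕ → X) (n : ℕ) (μ : ℝ) (S : List ℕ) : Prop :=
  S.head? = some 0 ∧ S.getLast? = some (n - 1) ∧ S.Pairwise (· < ·) ∧
    (∀ a ∈ S, a < n) ∧
    S.Chain' (fun a b =>
      (∀ j, a < j → j < b → arcLen d P a j ≤ μ) ∧ (b = n - 1 ∨ μ < arcLen d P a b))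

/-- The subsequence of `P` selected by the index list `S`, as a curve. -/
def subCurve (P : ℕ → X) (S : List ℕ) : ℕ → X :=
  fun t => P (S.getD t 0)

/-- Discrete c-packedness of the polygonal curve `P` (first `n` vertices): for every
ball, the total length of the edges of `P` contained in the ball is at most `c`
times the radius. -/
def CPacked (d : X → X → ℝ) (P : ℕ → X) (n : ℕ) (c : ℝ) : Prop :=
  ∀ (x : X) (r : ℝ), 0 ≤ r →
    ∑ k ∈ Finset.range (n - 1),
      (if d (P k) x ≤ r ∧ d (P (k + 1)) x ≤ r then d (P k) (P (k + 1)) else 0) ≤ c * r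

/-- Directed discrete Hausdorff distance from `P` (first `n` points) to `Q`
(first `m` points). -/
noncomputable def dirHaus (d : X → X → ℝ) (P : ℕ → X) (n : ℕ) (Q : ℕ → X) (m : ℕ) : ℝ :=
  sSup {r | ∃ i < n, r = sInf {s | ∃ j < m, s = d (P i) (Q j)}}

/-- Discrete (symmetric) Hausdorff distance. -/
noncomputable def dHaus (d : X → X → ℝ) (P : ℕ → X) (n : ℕ) (Q : ℕ → X) (m : ℕ) : ℝ :=
  max (dirHaus d P n Q m) (dirHaus d Q m P n)

/-! ### Auxiliary machinery for Statement 5 -/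

/-- Horizontal ladder: the points `(x+1, j), (x+2, j), …, (x+c, j)`. -/
def hlad (j : ℕ) : ℕ → ℕ → List (ℕ × ℕ)
  | _, 0 => []
  | x, c+1 => (x+1, j) :: hlad j (x+1) c

/-- Vertical ladder: the points `(i, y+1), …, (i, y+c)`. -/
def vlad (i : ℕ) : ℕ → ℕ → List (ℕ × ℕ)
  | _, 0 => []
  | y, c+1 => (i, y+1) :: vlad i (y+1) c

theorem chain_hlad (j x c : ℕ) : List.Chain IsStep (x, j) (hlad j x c) := by
  induction c generalizing x with
  | zero => exact List.Chain.nil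
  | succ c ih =>
      exact List.Chain.cons ⟨Or.inr rfl, Or.inl rfl, by simp⟩ (ih (x+1))

theorem chain_vlad (i y c : ℕ) : List.Chain IsStep (i, y) (vlad i y c) := by
  induction c generalizing y with
  | zero => exact List.Chain.nil
  | succ c ih =>
      exact List.Chain.cons ⟨Or.inl rfl, Or.inr rfl, by simp⟩ (ih (y+1))

theorem hlad_last (j x c : ℕ) : ((x, j) :: hlad j x c).getLast? = some (x + c, j) := by
  induction c generalizing x with
  | zero => rfl
  | succ c ih =>
      rw [hlad, List.getLast?_cons_cons, ih (x+1)]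
      congr 2
      omega

theorem vlad_last (i y c : ℕ) : ((i, y) :: vlad i y c).getLast? = some (i, y + c) := by
  induction c generalizing y with
  | zero => rfl
  | succ c ih =>
      rw [vlad, List.getLast?_cons_cons, ih (y+1)]
      congr 2
      omega

theorem mem_hlad {r : ℕ × ℕ} {j x c : ℕ} (h : r ∈ hlad j x c) :
    r.2 = j ∧ x < r.1 ∧ r.1 ≤ x + c := by
  induction c generalizing x with
  | zero => simp [hlad] at h
  | succ c ih =>
      rw [hlad, List.mem_cons] at h
      rcases h with h | h
      · subst h; exact ⟨rfl, by omega, by omega⟩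
      · obtain ⟨h1, h2, h3⟩ := ih h
        exact ⟨h1, by omega, by omega⟩

theorem mem_vlad {r : ℕ × ℕ} {i y c : ℕ} (h : r ∈ vlad i y c) :
    r.1 = i ∧ y < r.2 ∧ r.2 ≤ y + c := by
  induction c generalizing y with
  | zero => simp [vlad] at h
  | succ c ih =>
      rw [vlad, List.mem_cons] at h
      rcases h with h | h
      · subst h; exact ⟨rfl, by omega, by omega⟩
      · obtain ⟨h1, h2, h3⟩ := ih h
        exact ⟨h1, by omega, by omega⟩

/-- Expansion of a walk on the subsequence lattice to a walk on the full lattice. -/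
def expand (g : ℕ → ℕ) : List (ℕ × ℕ) → List (ℕ × ℕ)
  | [] => []
  | [p] => [(g p.1, p.2)]
  | p :: q :: l =>
      (g p.1, p.2) :: (hlad p.2 (g p.1) (g q.1 - g p.1 - 1) ++ expand g (q :: l))

theorem expand_ne_nil (g : ℕ → ℕ) (p : ℕ × ℕ) (l : List (ℕ × ℕ)) :
    expand g (p :: l) ≠ [] := by
  cases l <;> simp [expand]

theorem expand_head (g : ℕ → ℕ) (p : ℕ × ℕ) (l : List (ℕ × ℕ)) :
    (expand g (p :: l)).head? = some (g p.1, p.2) := by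
  cases l <;> rfl

theorem expand_last (g : ℕ → ℕ) :
    ∀ (l : List (ℕ × ℕ)) (p : ℕ × ℕ),
      (expand g (p :: l)).getLast? = ((p :: l).getLast?).map (fun q => (g q.1, q.2))
  | [], p => rfl
  | q :: l, p => by
      have hne : expand g (q :: l) ≠ [] := expand_ne_nil g q l
      have : expand g (p :: q :: l)
          = ((g p.1, p.2) :: hlad p.2 (g p.1) (g q.1 - g p.1 - 1)) ++ expand g (q :: l) := by
        simp [expand]
      rw [this, List.getLast?_append, expand_last g l q, List.getLast?_cons_cons,
        List.getLast?_eq_getLast (l := q :: l) (by simp)]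
      rfl

theorem expand_chain {g : ℕ → ℕ} {L : ℕ} (hg : ∀ a, a + 1 < L → g a < g (a + 1)) :
    ∀ l : List (ℕ × ℕ), List.Chain' IsStep l → (∀ p ∈ l, p.1 < L) →
      List.Chain' IsStep (expand g l)
  | [], _, _ => List.isChain_nil
  | [p], _, _ => List.isChain_singleton _
  | p :: q :: l, hch, hb => by
      have hstep : IsStep p q := (List.isChain_cons_cons.mp hch).1
      have hch' : List.Chain' IsStep (q :: l) := (List.isChain_cons_cons.mp hch).2
      have hb' : ∀ r ∈ q :: l, r.1 < L := fun r hr => hb r (List.mem_cons_of_mem _ hr)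
      have ih := expand_chain hg (q :: l) hch' hb'
      have hqL : q.1 < L := hb q (by simp)
      set c := g q.1 - g p.1 - 1 with hc
      have heq : expand g (p :: q :: l)
          = ((g p.1, p.2) :: hlad p.2 (g p.1) c) ++ expand g (q :: l) := by
        simp [expand, hc]
      rw [heq, List.Chain', List.isChain_append]
      refine ⟨chain_hlad p.2 (g p.1) c, ih, ?_⟩
      intro x hx y hy
      rw [hlad_last] at hx
      rw [expand_head] at hy
      cases hx
      cases hy
      obtain ⟨h1, h2, hne⟩ := hstep
      rcases h1 with h1 | h1
      · -- q.1 = p.1 : horizontal coordinate unchanged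
        have hgq : g q.1 = g p.1 := by rw [h1]
        have hc0 : c = 0 := by omega
        have h2' : q.2 = p.2 + 1 := by
          rcases h2 with h2 | h2
          · exact absurd (Prod.ext h1 h2) hne
          · exact h2
        exact ⟨Or.inl (by omega), Or.inr (by simpa using h2'), by
          simp only [ne_eq, Prod.mk.injEq, not_and]
          intro _; omega⟩
      · -- q.1 = p.1 + 1
        have hlt : g p.1 < g q.1 := by
          rw [h1]; exact hg p.1 (h1 ▸ hqL)
        have hgq : g q.1 = g p.1 + c + 1 := by omega
        refine ⟨Or.inr (by omega), ?_, by
          simp only [ne_eq, Prod.mk.injEq, not_and]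
          intro h; omega⟩
        rcases h2 with h2 | h2
        · exact Or.inl (by simpa using h2)
        · exact Or.inr (by simpa using h2)

theorem expand_mem {g : ℕ → ℕ} :
    ∀ l : List (ℕ × ℕ), List.Chain' IsStep l → ∀ r ∈ expand g l,
      (∃ p ∈ l, r = (g p.1, p.2)) ∨
      (∃ p ∈ l, ∃ q ∈ l, q.1 = p.1 + 1 ∧ r.2 = p.2 ∧ g p.1 < r.1 ∧ r.1 < g q.1)
  | [], _, r, hr => by simp [expand] at hr
  | [p], _, r, hr => by
      simp only [expand, List.mem_singleton] at hr
      exact Or.inl ⟨p, by simp, hr⟩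
  | p :: q :: l, hch, r, hr => by
      have hstep : IsStep p q := (List.isChain_cons_cons.mp hch).1
      have hch' : List.Chain' IsStep (q :: l) := (List.isChain_cons_cons.mp hch).2
      rw [show expand g (p :: q :: l)
          = (g p.1, p.2) :: (hlad p.2 (g p.1) (g q.1 - g p.1 - 1) ++ expand g (q :: l))
          from by simp [expand], List.mem_cons, List.mem_append] at hr
      rcases hr with hr | hr | hr
      · exact Or.inl ⟨p, by simp, hr⟩
      · obtain ⟨h2, h3, h4⟩ := mem_hlad hr
        have hq1 : q.1 = p.1 + 1 := by
          rcases hstep.1 with h | h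
          · exfalso
            have hgg : g q.1 = g p.1 := by rw [h]
            omega
          · exact h
        exact Or.inr ⟨p, by simp, q, by simp, hq1, h2, h3, by omega⟩
      · rcases expand_mem (q :: l) hch' r hr with ⟨p', hp', h⟩ | ⟨p', hp', q', hq', h⟩
        · exact Or.inl ⟨p', List.mem_cons_of_mem _ hp', h⟩
        · exact Or.inr ⟨p', List.mem_cons_of_mem _ hp', q', List.mem_cons_of_mem _ hq', h⟩

/-- The staircase walk through the `n × m` lattice. -/
def stair (n m : ℕ) : List (ℕ × ℕ) :=
  (0, 0) :: (hlad 0 0 (n - 1) ++ vlad (n - 1) 0 (m - 1))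

theorem stair_walk {n m : ℕ} (hn : 0 < n) (hm : 0 < m) : IsWalk n m (stair n m) := by
  have hsplit : stair n m
      = ((0, 0) :: hlad 0 0 (n - 1)) ++ vlad (n - 1) 0 (m - 1) := by
    simp [stair]
  refine ⟨by simp [stair], by simp [stair], ?_, ?_, ?_⟩
  · cases hm' : m - 1 with
    | zero =>
        have hv : vlad (n - 1) 0 (m - 1) = [] := by rw [hm']; rfl
        rw [hsplit, hv, List.append_nil, hlad_last]
        congr 2
        omega
    | succ c =>
        have hv : vlad (n - 1) 0 (m - 1) = (n - 1, 1) :: vlad (n - 1) 1 c := by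
          rw [hm']; rfl
        rw [hsplit, hv, List.getLast?_append, vlad_last,
          show (1 : ℕ) + c = c + 1 from by omega]
        rfl
  · rw [hsplit, List.Chain', List.isChain_append]
    refine ⟨chain_hlad 0 0 (n - 1), ?_, ?_⟩
    · cases hm' : m - 1 with
      | zero => exact List.isChain_nil
      | succ c =>
          show List.Chain' IsStep ((n - 1, 0 + 1) :: vlad (n - 1) (0 + 1) c)
          exact chain_vlad (n - 1) (0 + 1) c
    · intro x hx y hy
      rw [hlad_last] at hx
      simp only [Option.mem_some_iff] at hx
      subst hx
      cases hm' : m - 1 with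
      | zero => rw [hm'] at hy; simp [vlad] at hy
      | succ c =>
          rw [hm'] at hy
          have hh : (vlad (n - 1) 0 (c + 1)).head? = some (n - 1, 1) := rfl
          rw [hh] at hy
          simp only [Option.mem_some_iff] at hy
          subst hy
          exact ⟨Or.inl (by omega), Or.inr rfl, by simp⟩
  · intro r hr
    rw [stair, List.mem_cons, List.mem_append] at hr
    rcases hr with hr | hr | hr
    · subst hr; exact ⟨hn, hm⟩
    · obtain ⟨h1, h2, h3⟩ := mem_hlad hr
      constructor <;> omega
    · obtain ⟨h1, h2, h3⟩ := mem_vlad hr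
      constructor <;> omega

theorem foldr_max_nonneg (l : List ℝ) : 0 ≤ l.foldr max 0 := by
  induction l with
  | nil => exact le_refl 0
  | cons x l ih => exact le_trans ih (le_max_right x _)

theorem le_foldr_max {l : List ℝ} {x : ℝ} (h : x ∈ l) : x ≤ l.foldr max 0 := by
  induction l with
  | nil => simp at h
  | cons y l ih =>
      rcases List.mem_cons.mp h with h | h
      · subst h; exact le_max_left _ _
      · exact le_trans (ih h) (le_max_right _ _)

theorem foldr_max_le {l : List ℝ} {B : ℝ} (hB : 0 ≤ B) (h : ∀ x ∈ l, x ≤ B) :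
    l.foldr max 0 ≤ B := by
  induction l with
  | nil => exact hB
  | cons x l ih =>
      exact max_le (h x (by simp)) (ih fun y hy => h y (List.mem_cons_of_mem _ hy))

/-- if `P'` (the subsequence of `P` given by the index list `S`,
containing the first and last vertices) is such that every vertex of `P` is within
distance `μ` of the last vertex of `P'` preceding it, then
`D_F(P, Q) ≤ D_F(P', Q) + μ` for every sequence `Q`. -/
theorem dF_le_subsequence_add {X : Type*} [MetricSpace X]
    (P : ℕ → X) (n : ℕ) (hn : 0 < n)
    (Q : ℕ → X) (m : ℕ) (hm : 0 < m) (μ : ℝ) (hμ : 0 ≤ μ)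
    (S : List ℕ) (hhead : S.head? = some 0) (hlast : S.getLast? = some (n - 1))
    (hsorted : S.Pairwise (· < ·)) (hmem : ∀ a ∈ S, a < n)
    (hpred : ∀ i < n, ∀ a ∈ S, a ≤ i → (∀ b ∈ S, b ≤ i → b ≤ a) →
      dist (P a) (P i) ≤ μ) :
    dF dist P n Q m ≤ dF dist (subCurve P S) S.length Q m + μ := by
  classical
  have hSne : S ≠ [] := fun h => by simp [h] at hhead
  have hL : 0 < S.length := List.length_pos_iff.mpr hSne
  set L := S.length with hLdef
  set g : ℕ → ℕ := fun a => S.getD a 0 with hgdef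
  have hgel : ∀ a, (ha : a < L) → g a = S[a] := fun a ha => List.getD_eq_getElem S 0 ha
  have hgmem : ∀ a, a < L → g a ∈ S := fun a ha => by
    rw [hgel a ha]; exact List.getElem_mem ha
  have hgn : ∀ a, a < L → g a < n := fun a ha => hmem _ (hgmem a ha)
  have hmono : ∀ a b, a < b → b < L → g a < g b := by
    intro a b hab hb
    have ha : a < L := lt_trans hab hb
    rw [hgel a ha, hgel b hb]
    exact List.pairwise_iff_get.mp hsorted ⟨a, ha⟩ ⟨b, hb⟩ hab
  have hg0 : g 0 = 0 := by
    rw [hgel 0 hL, List.getElem_zero hL]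
    rw [List.head?_eq_head hSne] at hhead
    exact Option.some_injective _ hhead
  have hgL : g (L - 1) = n - 1 := by
    rw [hgel (L - 1) (by omega)]
    rw [List.getLast?_eq_getLast (l := S) hSne, List.getLast_eq_getElem (l := S) hSne] at hlast
    exact Option.some_injective _ hlast
  set P' := subCurve P S with hP'
  set T := {c | ∃ F, IsWalk n m F ∧ walkCost dist P Q F = c} with hT
  set T' := {c | ∃ F, IsWalk L m F ∧ walkCost dist P' Q F = c} with hT'
  have hT'ne : T'.Nonempty := ⟨_, stair L m, stair_walk hL hm, rfl⟩
  have hTbdd : BddBelow T := by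
    refine ⟨0, ?_⟩
    rintro c ⟨F, _, rfl⟩
    exact foldr_max_nonneg _
  have key : ∀ c ∈ T', dF dist P n Q m - μ ≤ c := by
    rintro c ⟨F', ⟨hne, hhd, hlst, hch, hbd⟩, rfl⟩
    set w := walkCost dist P' Q F' with hw
    have hw0 : 0 ≤ w := foldr_max_nonneg _
    have helem : ∀ p ∈ F', dist (P' p.1) (Q p.2) ≤ w := fun p hp =>
      le_foldr_max (List.mem_map_of_mem hp)
    obtain ⟨p0, l0, rfl⟩ := List.exists_cons_of_ne_nil hne
    have hp0 : p0 = (0, 0) := by simpa using hhd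
    have hwalk : IsWalk n m (expand g (p0 :: l0)) := by
      refine ⟨expand_ne_nil g _ _, ?_, ?_, ?_, ?_⟩
      · rw [expand_head, hp0, hg0]
      · rw [expand_last, hlst]
        simp [hgL]
      · exact expand_chain (fun a h => hmono a (a + 1) (by omega) h) (p0 :: l0) hch
          (fun p hp => (hbd p hp).1)
      · intro r hr
        rcases expand_mem _ hch r hr with ⟨p, hp, rfl⟩ | ⟨p, hp, q, hq, h1, h2, h3, h4⟩
        · exact ⟨hgn _ (hbd p hp).1, (hbd p hp).2⟩
        · exact ⟨lt_trans h4 (hgn _ (hbd q hq).1), h2 ▸ (hbd p hp).2⟩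
    have hcost : walkCost dist P Q (expand g (p0 :: l0)) ≤ w + μ := by
      apply foldr_max_le (by linarith)
      intro x hx
      rw [List.mem_map] at hx
      obtain ⟨r, hr, rfl⟩ := hx
      rcases expand_mem _ hch r hr with ⟨p, hp, rfl⟩ | ⟨p, hp, q, hq, h1, h2, h3, h4⟩
      · have := helem p hp
        calc dist (P (g p.1)) (Q p.2) = dist (P' p.1) (Q p.2) := rfl
          _ ≤ w := helem p hp
          _ ≤ w + μ := by linarith
      · have hqL : q.1 < L := (hbd q hq).1
        have hp1L : p.1 < L := by omega
        have hd1 : dist (P (g p.1)) (P r.1) ≤ μ := by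
          apply hpred r.1 (lt_trans h4 (hgn _ hqL)) (g p.1) (hgmem _ hp1L) (le_of_lt h3)
          intro b hb hble
          obtain ⟨i, hiL, rfl⟩ := List.mem_iff_getElem.mp hb
          rw [← hgel i hiL] at hble ⊢
          by_cases hip : i ≤ p.1
          · rcases lt_or_eq_of_le hip with h | h
            · exact le_of_lt (hmono i p.1 h hp1L)
            · rw [h]
          · exfalso
            have hge : g q.1 ≤ g i := by
              rcases lt_or_eq_of_le (show q.1 ≤ i by omega) with h | h
              · exact le_of_lt (hmono q.1 i h hiL)
              · rw [h]
            omega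
        calc dist (P r.1) (Q r.2)
            ≤ dist (P r.1) (P (g p.1)) + dist (P (g p.1)) (Q r.2) := dist_triangle _ _ _
          _ ≤ μ + w := by
              refine add_le_add ?_ ?_
              · rw [dist_comm]; exact hd1
              · rw [h2]; exact helem p hp
          _ = w + μ := by ring
    have h1 : dF dist P n Q m ≤ walkCost dist P Q (expand g (p0 :: l0)) :=
      csInf_le hTbdd ⟨expand g (p0 :: l0), hwalk, rfl⟩
    linarith
  have h2 : dF dist P n Q m - μ ≤ sInf T' := le_csInf hT'ne key
  have h3 : dF dist P' L Q m = sInf T' := rfl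
  rw [h3]
  linarith

end Frechet
end

section
/- Directed Hausdorff decision via simplification: let ρ* ≥ 0, 0 < ε < 1, μ ≤ ερ*, and define the matrix H over pairs (s, j) where p_s ranges over vertices of P^μ and q_j over Q: H[s,j] = 0 iff some vertex p' of P between p_s (inclusive) and the next simplification vertex (exclusive) satisfies d(p', q_j) ≤ ρ*. If every row and every column of H contains a zero, then the (symmetric, discrete) Hausdorff distance D_H(P, Q) ≤ (1+ε)ρ*; and if some row or column of H has no zero, then D_H(P, Q) > ρ*. -/
open scoped BigOperators

namespace Frechet

variable {X : Type*}

/-- The cell of the Hausdorff matrix `H` indexed by the `k`-th simplification vertex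
and the query vertex `q_j` is zero: some vertex `p'` of `P` between the `k`-th
simplification vertex (inclusive) and the next one (exclusive) has `d(p', q_j) ≤ ρ`. -/
def BlockZero (d : X → X → ℝ) (P : ℕ → X) (n : ℕ) (Q : ℕ → X) (S : List ℕ)
    (ρ : ℝ) (t j : ℕ) : Prop :=
  ∃ i, S.getD t 0 ≤ i ∧
    i < (if t + 1 < S.length then S.getD (t + 1) 0 else n) ∧
    d (P i) (Q j) ≤ ρ

section Aux

lemma set_finite_aux (f : ℕ → ℝ) (m : ℕ) : {s : ℝ | ∃ j < m, s = f j}.Finite := by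
  have h : {s : ℝ | ∃ j < m, s = f j} ⊆ f '' Set.Iio m := by
    rintro s ⟨j, hj, rfl⟩; exact ⟨j, hj, rfl⟩
  exact ((Set.finite_Iio m).image f).subset h

lemma sInf_mem_aux (f : ℕ → ℝ) {m : ℕ} (hm : 0 < m) :
    ∃ j < m, sInf {s : ℝ | ∃ j < m, s = f j} = f j := by
  have hne : {s : ℝ | ∃ j < m, s = f j}.Nonempty := ⟨f 0, 0, hm, rfl⟩
  exact Set.Nonempty.csInf_mem hne (set_finite_aux f m)

lemma dist_le_arcLen [MetricSpace X] (P : ℕ → X) {a b : ℕ} (hab : a ≤ b) :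
    dist (P a) (P b) ≤ arcLen dist P a b := by
  induction b, hab using Nat.le_induction with
  | base => simp [arcLen]
  | succ b hab ih =>
    have he : arcLen dist P a (b + 1) = arcLen dist P a b + dist (P b) (P (b + 1)) := by
      rw [arcLen, arcLen, Finset.sum_Ico_succ_top hab]
    rw [he]
    calc dist (P a) (P (b + 1)) ≤ dist (P a) (P b) + dist (P b) (P (b + 1)) :=
          dist_triangle _ _ _
      _ ≤ _ := by linarith

lemma arcLen_mono [MetricSpace X] (P : ℕ → X) {a a' b b' : ℕ} (ha : a' ≤ a) (hb : b ≤ b') :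
    arcLen dist P a b ≤ arcLen dist P a' b' :=
  Finset.sum_le_sum_of_subset_of_nonneg (Finset.Ico_subset_Ico ha hb)
    (fun _ _ _ => dist_nonneg)

lemma getD_lt_getD {S : List ℕ} (hs : S.Pairwise (· < ·)) {t : ℕ} (h : t + 1 < S.length) :
    S.getD t 0 < S.getD (t + 1) 0 := by
  rw [List.getD_eq_getElem S 0 (by omega), List.getD_eq_getElem S 0 h]
  exact List.pairwise_iff_getElem.mp hs t (t + 1) (by omega) h (Nat.lt_succ_self t)

lemma getD_mem {S : List ℕ} {t : ℕ} (h : t < S.length) : S.getD t 0 ∈ S := by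
  rw [List.getD_eq_getElem S 0 h]; exact List.getElem_mem h

lemma block_cover (n : ℕ) (S : List ℕ) (hhead : S.head? = some 0) {i : ℕ} (hi : i < n) :
    ∃ t < S.length, S.getD t 0 ≤ i ∧
      i < (if t + 1 < S.length then S.getD (t + 1) 0 else n) := by
  classical
  have hne : S ≠ [] := by intro h; simp [h] at hhead
  have hL : 0 < S.length := List.length_pos_iff.mpr hne
  have h0 : S.getD 0 0 = 0 := by
    cases S with
    | nil => simp at hhead
    | cons a l => simp only [List.head?_cons, Option.some.injEq] at hhead; simp [hhead]
  set t := Nat.findGreatest (fun t => S.getD t 0 ≤ i) (S.length - 1) with ht_def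
  have htP : S.getD t 0 ≤ i :=
    Nat.findGreatest_spec (P := fun t => S.getD t 0 ≤ i) (Nat.zero_le _)
      (by show S.getD 0 0 ≤ i; rw [h0]; exact Nat.zero_le i)
  have htL : t < S.length :=
    lt_of_le_of_lt (Nat.findGreatest_le _) (Nat.sub_lt hL one_pos)
  refine ⟨t, htL, htP, ?_⟩
  split_ifs with h
  · have hng : ¬ S.getD (t + 1) 0 ≤ i := by
      have := Nat.findGreatest_is_greatest (P := fun t => S.getD t 0 ≤ i)
        (n := S.length - 1) (k := t + 1) (Nat.lt_succ_self t) (by omega)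
      simpa using this
    omega
  · exact hi

lemma block_arc [MetricSpace X] (P : ℕ → X) (n : ℕ) (μ : ℝ) (hμ0 : 0 ≤ μ) {S : List ℕ}
    (hS : IsSimplification dist P n μ S) {t i : ℕ} (ht : t < S.length)
    (h1 : S.getD t 0 ≤ i) (h2 : i < if t + 1 < S.length then S.getD (t + 1) 0 else n) :
    arcLen dist P (S.getD t 0) i ≤ μ := by
  obtain ⟨hh, hl, hsort, hbd, hch⟩ := hS
  have hne : S ≠ [] := by intro h; simp [h] at hh
  rcases eq_or_lt_of_le h1 with heq | hlt
  · rw [← heq]; simp [arcLen, hμ0]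
  · by_cases h : t + 1 < S.length
    · rw [if_pos h] at h2
      have hch' := List.isChain_iff_getElem.mp hch t (by omega)
      have e1 : S[t]'(by omega) = S.getD t 0 := by
        rw [List.getD_eq_getElem S 0 (by omega)]
      have e2 : S[t + 1]'h = S.getD (t + 1) 0 := by
        rw [List.getD_eq_getElem S 0 h]
      rw [e1, e2] at hch'
      exact hch'.1 i hlt h2
    · rw [if_neg h] at h2
      exfalso
      have ht' : t = S.length - 1 := by omega
      subst ht'
      have hlast : S.getD (S.length - 1) 0 = n - 1 := by
        rw [List.getLast?_eq_getLast hne, Option.some.injEq] at hl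
        rw [List.getD_eq_getElem S 0 ht, ← List.getLast_eq_getElem hne, hl]
      omega

lemma block_dist [MetricSpace X] (P : ℕ → X) (n : ℕ) (μ : ℝ) (hμ0 : 0 ≤ μ) {S : List ℕ}
    (hS : IsSimplification dist P n μ S) {t i i' : ℕ} (ht : t < S.length)
    (h1 : S.getD t 0 ≤ i) (h2 : i < if t + 1 < S.length then S.getD (t + 1) 0 else n)
    (h1' : S.getD t 0 ≤ i') (h2' : i' < if t + 1 < S.length then S.getD (t + 1) 0 else n) :
    dist (P i) (P i') ≤ μ := by
  rcases le_total i i' with h | h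
  · calc dist (P i) (P i') ≤ arcLen dist P i i' := dist_le_arcLen P h
      _ ≤ arcLen dist P (S.getD t 0) i' := arcLen_mono P h1 le_rfl
      _ ≤ μ := block_arc P n μ hμ0 hS ht h1' h2'
  · rw [dist_comm]
    calc dist (P i') (P i) ≤ arcLen dist P i' i := dist_le_arcLen P h
      _ ≤ arcLen dist P (S.getD t 0) i := arcLen_mono P h1' le_rfl
      _ ≤ μ := block_arc P n μ hμ0 hS ht h1 h2

end Aux

/-- directed Hausdorff decision via simplification. If every row and
every column of the matrix `H` contains a zero then `D_H(P,Q) ≤ (1+ε)ρ*`, and if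
some row or some column of `H` has no zero then `D_H(P,Q) > ρ*`. -/
theorem hausdorff_decision {X : Type*} [MetricSpace X]
    (P : ℕ → X) (n : ℕ) (hn : 0 < n)
    (Q : ℕ → X) (m : ℕ) (hm : 0 < m)
    (ρstar ε μ : ℝ) (hρ : 0 ≤ ρstar) (hε0 : 0 < ε) (hε1 : ε < 1)
    (hμ0 : 0 ≤ μ) (hμ : μ ≤ ε * ρstar)
    (S : List ℕ) (hS : IsSimplification dist P n μ S) :
    (((∀ j < m, ∃ t < S.length, BlockZero dist P n Q S ρstar t j) ∧
      (∀ t < S.length, ∃ j < m, BlockZero dist P n Q S ρstar t j)) →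
        dHaus dist P n Q m ≤ (1 + ε) * ρstar) ∧
    (((∃ j < m, ∀ t < S.length, ¬ BlockZero dist P n Q S ρstar t j) ∨
      (∃ t < S.length, ∀ j < m, ¬ BlockZero dist P n Q S ρstar t j)) →
        ρstar < dHaus dist P n Q m) := by
  obtain ⟨hh, hl, hsort, hbd, hch⟩ := hS
  have hS' : IsSimplification dist P n μ S := ⟨hh, hl, hsort, hbd, hch⟩
  have hmemn : ∀ t < S.length, S.getD t 0 < n := fun t ht => hbd _ (getD_mem ht)
  constructor
  · rintro ⟨hrow, hcol⟩
    have hd1 : dirHaus dist P n Q m ≤ (1 + ε) * ρstar := by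
      refine csSup_le ⟨_, 0, hn, rfl⟩ ?_
      rintro r ⟨i, hi, rfl⟩
      obtain ⟨t, ht, hti, htb⟩ := block_cover n S hh hi
      obtain ⟨j, hj, i', hi'1, hi'2, hd⟩ := hcol t ht
      have hii' : dist (P i) (P i') ≤ μ := block_dist P n μ hμ0 hS' ht hti htb hi'1 hi'2
      have hb : dist (P i) (Q j) ≤ (1 + ε) * ρstar := by
        calc dist (P i) (Q j) ≤ dist (P i) (P i') + dist (P i') (Q j) := dist_triangle _ _ _
          _ ≤ μ + ρstar := add_le_add hii' hd
          _ ≤ (1 + ε) * ρstar := by nlinarith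
      exact le_trans (csInf_le (set_finite_aux (fun j => dist (P i) (Q j)) m).bddBelow
        ⟨j, hj, rfl⟩) hb
    have hd2 : dirHaus dist Q m P n ≤ (1 + ε) * ρstar := by
      refine csSup_le ⟨_, 0, hm, rfl⟩ ?_
      rintro r ⟨j, hj, rfl⟩
      obtain ⟨t, ht, i, hi1, hi2, hd⟩ := hrow j hj
      have hin : i < n := by
        by_cases h : t + 1 < S.length
        · rw [if_pos h] at hi2; exact lt_trans hi2 (hmemn _ h)
        · rwa [if_neg h] at hi2
      have hb : dist (Q j) (P i) ≤ (1 + ε) * ρstar := by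
        rw [dist_comm]; nlinarith
      exact le_trans (csInf_le (set_finite_aux (fun i => dist (Q j) (P i)) n).bddBelow
        ⟨i, hin, rfl⟩) hb
    exact max_le hd1 hd2
  · rintro (⟨j, hj, hrow⟩ | ⟨t, ht, hcol⟩)
    · have hfar : ∀ i < n, ρstar < dist (Q j) (P i) := by
        intro i hi
        obtain ⟨t, ht, hti, htb⟩ := block_cover n S hh hi
        by_contra hc; push_neg at hc
        exact hrow t ht ⟨i, hti, htb, by rwa [dist_comm] at hc⟩
      obtain ⟨i0, hi0, heq⟩ := sInf_mem_aux (fun i => dist (Q j) (P i)) hn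
      have h1 : ρstar < sInf {s : ℝ | ∃ i < n, s = dist (Q j) (P i)} := by
        rw [heq]; exact hfar i0 hi0
      have h2 : sInf {s : ℝ | ∃ i < n, s = dist (Q j) (P i)} ≤ dirHaus dist Q m P n :=
        le_csSup (set_finite_aux
          (fun j => sInf {s : ℝ | ∃ i < n, s = dist (Q j) (P i)}) m).bddAbove ⟨j, hj, rfl⟩
      exact lt_of_lt_of_le h1 (le_trans h2 (le_max_right _ _))
    · have hi0b : S.getD t 0 < (if t + 1 < S.length then S.getD (t + 1) 0 else n) := by
        split_ifs with h
        · exact getD_lt_getD hsort h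
        · exact hmemn t ht
      have hfar : ∀ j < m, ρstar < dist (P (S.getD t 0)) (Q j) := by
        intro j hj
        by_contra hc; push_neg at hc
        exact hcol j hj ⟨S.getD t 0, le_rfl, hi0b, hc⟩
      obtain ⟨j0, hj0, heq⟩ := sInf_mem_aux (fun j => dist (P (S.getD t 0)) (Q j)) hm
      have h1 : ρstar < sInf {s : ℝ | ∃ j < m, s = dist (P (S.getD t 0)) (Q j)} := by
        rw [heq]; exact hfar j0 hj0
      have h2 : sInf {s : ℝ | ∃ j < m, s = dist (P (S.getD t 0)) (Q j)} ≤
          dirHaus dist P n Q m :=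
        le_csSup (set_finite_aux
          (fun i => sInf {s : ℝ | ∃ j < m, s = dist (P i) (Q j)}) n).bddAbove
          ⟨S.getD t 0, hmemn t ht, rfl⟩
      exact lt_of_lt_of_le h1 (le_trans h2 (le_max_left _ _))


end Frechet
end
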